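/- Consider the target function f(x,y) = y₁y₂y₃·Q_S(x₁,x₂,x₃) with Q_S(x) = 1 - (1-x₁)(1-x₂)(1-x₃)/4 - (1+x₁)(1+x₂)(1+x₃)/4, and uniformly random (x₁,x₂,x₃,y₁,y₂,y₃) ∈ {-1,1}⁶. Suppose party 3's guess G₃ is an arbitrary {-1,1}-valued function of (x₃, y₃, m₁, m₂), where m₁ is a {-1,1}-valued function of (x₁, x₂, y₁) and m₂ is a {-1,1}-valued function of (x₁, x₂, y₂). Then the probability that G₃ = f is at most 3/4. -/

import Mathlib

noncomputable def QS (x₁ x₂ x₃ : ℝ) : ℝ :=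
  1 - (1 - x₁) * (1 - x₂) * (1 - x₃) / 4 - (1 + x₁) * (1 + x₂) * (1 + x₃) / 4

notation "pm" => ({-1, 1} : Finset ℝ)

private lemma pm_mem (x : ℝ) (hx : x ∈ ({-1, 1} : Finset ℝ)) : x = -1 ∨ x = 1 := by
  simpa using hx

private lemma mem_pm_of (x : ℝ) (hx : x = 1 ∨ x = -1) : x ∈ ({-1, 1} : Finset ℝ) := by
  rcases hx with rfl | rfl <;> simp

private lemma ptw (a b : ℝ) (ha : a = 1 ∨ a = -1) (hb : b = 1 ∨ b = -1) :
    (if a = b then (1:ℝ) else 0) ≤ (1 + a * b) / 2 := by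
  rcases ha with rfl | rfl <;> rcases hb with rfl | rfl <;> norm_num

private lemma quad (g : ℝ → ℝ → ℝ) (p q r s : ℝ)
    (hp : p = 1 ∨ p = -1) (hq : q = 1 ∨ q = -1)
    (hr : r = 1 ∨ r = -1) (hs : s = 1 ∨ s = -1) :
    g p r - g p s - g q r + g q s
      = ((p - q) * (r - s) / 4) * (g 1 1 - g 1 (-1) - g (-1) 1 + g (-1) (-1)) := by
  rcases hp with rfl | rfl <;> rcases hq with rfl | rfl <;>
    rcases hr with rfl | rfl <;> rcases hs with rfl | rfl <;> ring

private lemma cval (p q r s : ℝ)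
    (hp : p = 1 ∨ p = -1) (hq : q = 1 ∨ q = -1)
    (hr : r = 1 ∨ r = -1) (hs : s = 1 ∨ s = -1) :
    (p - q) * (r - s) / 4 = 1 ∨ (p - q) * (r - s) / 4 = 0 ∨ (p - q) * (r - s) / 4 = -1 := by
  rcases hp with rfl | rfl <;> rcases hq with rfl | rfl <;>
    rcases hr with rfl | rfl <;> rcases hs with rfl | rfl <;> norm_num

private lemma bnd (a : ℝ) (h : a = 1 ∨ a = -1) : -1 ≤ a ∧ a ≤ 1 := by
  rcases h with rfl | rfl <;> norm_num

private lemma main_ineq (c1 c2 c3 c4 D1 D2 : ℝ)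
    (h1 : c1 = 1 ∨ c1 = 0 ∨ c1 = -1) (h2 : c2 = 1 ∨ c2 = 0 ∨ c2 = -1)
    (h3 : c3 = 1 ∨ c3 = 0 ∨ c3 = -1) (h4 : c4 = 1 ∨ c4 = 0 ∨ c4 = -1)
    (hD1l : -8 ≤ D1) (hD1r : D1 ≤ 8) (hD2l : -8 ≤ D2) (hD2r : D2 ≤ 8) :
    c1 * (-D1 + D2) + c2 * (D1 + D2) + c3 * (D1 + D2) + c4 * (D1 - D2) ≤ 32 := by
  rcases h1 with rfl | rfl | rfl <;> rcases h2 with rfl | rfl | rfl <;>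
    rcases h3 with rfl | rfl | rfl <;> rcases h4 with rfl | rfl | rfl <;> linarith

theorem stmt_11 (G₃ : ℝ → ℝ → ℝ → ℝ → ℝ) (m₁ m₂ : ℝ → ℝ → ℝ → ℝ)
    (hm₁ : ∀ x₁ ∈ pm, ∀ x₂ ∈ pm, ∀ y₁ ∈ pm, m₁ x₁ x₂ y₁ = 1 ∨ m₁ x₁ x₂ y₁ = -1)
    (hm₂ : ∀ x₁ ∈ pm, ∀ x₂ ∈ pm, ∀ y₂ ∈ pm, m₂ x₁ x₂ y₂ = 1 ∨ m₂ x₁ x₂ y₂ = -1)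
    (hG : ∀ x₃ ∈ pm, ∀ y₃ ∈ pm, ∀ u ∈ pm, ∀ v ∈ pm,
      G₃ x₃ y₃ u v = 1 ∨ G₃ x₃ y₃ u v = -1) :
    (1 / 64 : ℝ) * ∑ x₁ ∈ pm, ∑ x₂ ∈ pm, ∑ x₃ ∈ pm, ∑ y₁ ∈ pm, ∑ y₂ ∈ pm, ∑ y₃ ∈ pm,
        (if G₃ x₃ y₃ (m₁ x₁ x₂ y₁) (m₂ x₁ x₂ y₂) = y₁ * y₂ * y₃ * QS x₁ x₂ x₃
          then (1 : ℝ) else 0) ≤ 3 / 4 := by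
  have h1 : (1:ℝ) ∈ pm := by simp
  have hm : (-1:ℝ) ∈ pm := by simp
  have hb : (∑ x₁ ∈ pm, ∑ x₂ ∈ pm, ∑ x₃ ∈ pm, ∑ y₁ ∈ pm, ∑ y₂ ∈ pm, ∑ y₃ ∈ pm,
        (if G₃ x₃ y₃ (m₁ x₁ x₂ y₁) (m₂ x₁ x₂ y₂) = y₁ * y₂ * y₃ * QS x₁ x₂ x₃
          then (1 : ℝ) else 0)) ≤
      ∑ x₁ ∈ pm, ∑ x₂ ∈ pm, ∑ x₃ ∈ pm, ∑ y₁ ∈ pm, ∑ y₂ ∈ pm, ∑ y₃ ∈ pm,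
        (1 + G₃ x₃ y₃ (m₁ x₁ x₂ y₁) (m₂ x₁ x₂ y₂) * (y₁ * y₂ * y₃ * QS x₁ x₂ x₃)) / 2 := by
    apply Finset.sum_le_sum; intro x₁ hx₁
    apply Finset.sum_le_sum; intro x₂ hx₂
    apply Finset.sum_le_sum; intro x₃ hx₃
    apply Finset.sum_le_sum; intro y₁ hy₁
    apply Finset.sum_le_sum; intro y₂ hy₂
    apply Finset.sum_le_sum; intro y₃ hy₃
    have hf : y₁ * y₂ * y₃ * QS x₁ x₂ x₃ = 1 ∨ y₁ * y₂ * y₃ * QS x₁ x₂ x₃ = -1 := by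
      rcases pm_mem _ hx₁ with rfl | rfl <;> rcases pm_mem _ hx₂ with rfl | rfl <;>
        rcases pm_mem _ hx₃ with rfl | rfl <;> rcases pm_mem _ hy₁ with rfl | rfl <;>
        rcases pm_mem _ hy₂ with rfl | rfl <;> rcases pm_mem _ hy₃ with rfl | rfl <;>
        norm_num [QS]
    exact ptw _ _ (hG x₃ hx₃ y₃ hy₃ _ (mem_pm_of _ (hm₁ x₁ hx₁ x₂ hx₂ y₁ hy₁))
      _ (mem_pm_of _ (hm₂ x₁ hx₁ x₂ hx₂ y₂ hy₂))) hf
  refine le_trans (mul_le_mul_of_nonneg_left hb (by norm_num)) ?_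
  have epp : ∀ x₃ y₃ : ℝ, G₃ x₃ y₃ (m₁ 1 1 1) (m₂ 1 1 1) - G₃ x₃ y₃ (m₁ 1 1 1) (m₂ 1 1 (-1)) - G₃ x₃ y₃ (m₁ 1 1 (-1)) (m₂ 1 1 1) + G₃ x₃ y₃ (m₁ 1 1 (-1)) (m₂ 1 1 (-1)) = ((m₁ 1 1 1 - m₁ 1 1 (-1)) * (m₂ 1 1 1 - m₂ 1 1 (-1)) / 4) * (G₃ x₃ y₃ 1 1 - G₃ x₃ y₃ 1 (-1) - G₃ x₃ y₃ (-1) 1 + G₃ x₃ y₃ (-1) (-1)) :=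
    fun x₃ y₃ => quad (G₃ x₃ y₃) _ _ _ _ (hm₁ 1 h1 1 h1 1 h1) (hm₁ 1 h1 1 h1 (-1) hm) (hm₂ 1 h1 1 h1 1 h1) (hm₂ 1 h1 1 h1 (-1) hm)
  have epn : ∀ x₃ y₃ : ℝ, G₃ x₃ y₃ (m₁ 1 (-1) 1) (m₂ 1 (-1) 1) - G₃ x₃ y₃ (m₁ 1 (-1) 1) (m₂ 1 (-1) (-1)) - G₃ x₃ y₃ (m₁ 1 (-1) (-1)) (m₂ 1 (-1) 1) + G₃ x₃ y₃ (m₁ 1 (-1) (-1)) (m₂ 1 (-1) (-1)) = ((m₁ 1 (-1) 1 - m₁ 1 (-1) (-1)) * (m₂ 1 (-1) 1 - m₂ 1 (-1) (-1)) / 4) * (G₃ x₃ y₃ 1 1 - G₃ x₃ y₃ 1 (-1) - G₃ x₃ y₃ (-1) 1 + G₃ x₃ y₃ (-1) (-1)) :=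
    fun x₃ y₃ => quad (G₃ x₃ y₃) _ _ _ _ (hm₁ 1 h1 (-1) hm 1 h1) (hm₁ 1 h1 (-1) hm (-1) hm) (hm₂ 1 h1 (-1) hm 1 h1) (hm₂ 1 h1 (-1) hm (-1) hm)
  have enp : ∀ x₃ y₃ : ℝ, G₃ x₃ y₃ (m₁ (-1) 1 1) (m₂ (-1) 1 1) - G₃ x₃ y₃ (m₁ (-1) 1 1) (m₂ (-1) 1 (-1)) - G₃ x₃ y₃ (m₁ (-1) 1 (-1)) (m₂ (-1) 1 1) + G₃ x₃ y₃ (m₁ (-1) 1 (-1)) (m₂ (-1) 1 (-1)) = ((m₁ (-1) 1 1 - m₁ (-1) 1 (-1)) * (m₂ (-1) 1 1 - m₂ (-1) 1 (-1)) / 4) * (G₃ x₃ y₃ 1 1 - G₃ x₃ y₃ 1 (-1) - G₃ x₃ y₃ (-1) 1 + G₃ x₃ y₃ (-1) (-1)) :=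
    fun x₃ y₃ => quad (G₃ x₃ y₃) _ _ _ _ (hm₁ (-1) hm 1 h1 1 h1) (hm₁ (-1) hm 1 h1 (-1) hm) (hm₂ (-1) hm 1 h1 1 h1) (hm₂ (-1) hm 1 h1 (-1) hm)
  have enn : ∀ x₃ y₃ : ℝ, G₃ x₃ y₃ (m₁ (-1) (-1) 1) (m₂ (-1) (-1) 1) - G₃ x₃ y₃ (m₁ (-1) (-1) 1) (m₂ (-1) (-1) (-1)) - G₃ x₃ y₃ (m₁ (-1) (-1) (-1)) (m₂ (-1) (-1) 1) + G₃ x₃ y₃ (m₁ (-1) (-1) (-1)) (m₂ (-1) (-1) (-1)) = ((m₁ (-1) (-1) 1 - m₁ (-1) (-1) (-1)) * (m₂ (-1) (-1) 1 - m₂ (-1) (-1) (-1)) / 4) * (G₃ x₃ y₃ 1 1 - G₃ x₃ y₃ 1 (-1) - G₃ x₃ y₃ (-1) 1 + G₃ x₃ y₃ (-1) (-1)) :=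
    fun x₃ y₃ => quad (G₃ x₃ y₃) _ _ _ _ (hm₁ (-1) hm (-1) hm 1 h1) (hm₁ (-1) hm (-1) hm (-1) hm) (hm₂ (-1) hm (-1) hm 1 h1) (hm₂ (-1) hm (-1) hm (-1) hm)
  have hcpp := cval _ _ _ _ (hm₁ 1 h1 1 h1 1 h1) (hm₁ 1 h1 1 h1 (-1) hm) (hm₂ 1 h1 1 h1 1 h1) (hm₂ 1 h1 1 h1 (-1) hm)
  have hcpn := cval _ _ _ _ (hm₁ 1 h1 (-1) hm 1 h1) (hm₁ 1 h1 (-1) hm (-1) hm) (hm₂ 1 h1 (-1) hm 1 h1) (hm₂ 1 h1 (-1) hm (-1) hm)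
  have hcnp := cval _ _ _ _ (hm₁ (-1) hm 1 h1 1 h1) (hm₁ (-1) hm 1 h1 (-1) hm) (hm₂ (-1) hm 1 h1 1 h1) (hm₂ (-1) hm 1 h1 (-1) hm)
  have hcnn := cval _ _ _ _ (hm₁ (-1) hm (-1) hm 1 h1) (hm₁ (-1) hm (-1) hm (-1) hm) (hm₂ (-1) hm (-1) hm 1 h1) (hm₂ (-1) hm (-1) hm (-1) hm)
  have hgpppp := bnd _ (hG 1 h1 1 h1 1 h1 1 h1)
  have hgpppn := bnd _ (hG 1 h1 1 h1 1 h1 (-1) hm)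
  have hgppnp := bnd _ (hG 1 h1 1 h1 (-1) hm 1 h1)
  have hgppnn := bnd _ (hG 1 h1 1 h1 (-1) hm (-1) hm)
  have hgpnpp := bnd _ (hG 1 h1 (-1) hm 1 h1 1 h1)
  have hgpnpn := bnd _ (hG 1 h1 (-1) hm 1 h1 (-1) hm)
  have hgpnnp := bnd _ (hG 1 h1 (-1) hm (-1) hm 1 h1)
  have hgpnnn := bnd _ (hG 1 h1 (-1) hm (-1) hm (-1) hm)
  have hgnppp := bnd _ (hG (-1) hm 1 h1 1 h1 1 h1)
  have hgnppn := bnd _ (hG (-1) hm 1 h1 1 h1 (-1) hm)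
  have hgnpnp := bnd _ (hG (-1) hm 1 h1 (-1) hm 1 h1)
  have hgnpnn := bnd _ (hG (-1) hm 1 h1 (-1) hm (-1) hm)
  have hgnnpp := bnd _ (hG (-1) hm (-1) hm 1 h1 1 h1)
  have hgnnpn := bnd _ (hG (-1) hm (-1) hm 1 h1 (-1) hm)
  have hgnnnp := bnd _ (hG (-1) hm (-1) hm (-1) hm 1 h1)
  have hgnnnn := bnd _ (hG (-1) hm (-1) hm (-1) hm (-1) hm)
  have hstruct := main_ineq ((m₁ 1 1 1 - m₁ 1 1 (-1)) * (m₂ 1 1 1 - m₂ 1 1 (-1)) / 4) ((m₁ 1 (-1) 1 - m₁ 1 (-1) (-1)) * (m₂ 1 (-1) 1 - m₂ 1 (-1) (-1)) / 4) ((m₁ (-1) 1 1 - m₁ (-1) 1 (-1)) * (m₂ (-1) 1 1 - m₂ (-1) 1 (-1)) / 4) ((m₁ (-1) (-1) 1 - m₁ (-1) (-1) (-1)) * (m₂ (-1) (-1) 1 - m₂ (-1) (-1) (-1)) / 4)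
    ((G₃ 1 1 1 1 - G₃ 1 1 1 (-1) - G₃ 1 1 (-1) 1 + G₃ 1 1 (-1) (-1)) - (G₃ 1 (-1) 1 1 - G₃ 1 (-1) 1 (-1) - G₃ 1 (-1) (-1) 1 + G₃ 1 (-1) (-1) (-1))) ((G₃ (-1) 1 1 1 - G₃ (-1) 1 1 (-1) - G₃ (-1) 1 (-1) 1 + G₃ (-1) 1 (-1) (-1)) - (G₃ (-1) (-1) 1 1 - G₃ (-1) (-1) 1 (-1) - G₃ (-1) (-1) (-1) 1 + G₃ (-1) (-1) (-1) (-1))) hcpp hcpn hcnp hcnn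
    (by linarith [hgpppp.1, hgpppp.2, hgpppn.1, hgpppn.2, hgppnp.1, hgppnp.2, hgppnn.1, hgppnn.2, hgpnpp.1, hgpnpp.2, hgpnpn.1, hgpnpn.2, hgpnnp.1, hgpnnp.2, hgpnnn.1, hgpnnn.2, hgnppp.1, hgnppp.2, hgnppn.1, hgnppn.2, hgnpnp.1, hgnpnp.2, hgnpnn.1, hgnpnn.2, hgnnpp.1, hgnnpp.2, hgnnpn.1, hgnnpn.2, hgnnnp.1, hgnnnp.2, hgnnnn.1, hgnnnn.2]) (by linarith [hgpppp.1, hgpppp.2, hgpppn.1, hgpppn.2, hgppnp.1, hgppnp.2, hgppnn.1, hgppnn.2, hgpnpp.1, hgpnpp.2, hgpnpn.1, hgpnpn.2, hgpnnp.1, hgpnnp.2, hgpnnn.1, hgpnnn.2, hgnppp.1, hgnppp.2, hgnppn.1, hgnppn.2, hgnpnp.1, hgnpnp.2, hgnpnn.1, hgnpnn.2, hgnnpp.1, hgnnpp.2, hgnnpn.1, hgnnpn.2, hgnnnp.1, hgnnnp.2, hgnnnn.1, hgnnnn.2])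
    (by linarith [hgpppp.1, hgpppp.2, hgpppn.1, hgpppn.2, hgppnp.1, hgppnp.2, hgppnn.1, hgppnn.2, hgpnpp.1, hgpnpp.2, hgpnpn.1, hgpnpn.2, hgpnnp.1, hgpnnp.2, hgpnnn.1, hgpnnn.2, hgnppp.1, hgnppp.2, hgnppn.1, hgnppn.2, hgnpnp.1, hgnpnp.2, hgnpnn.1, hgnpnn.2, hgnnpp.1, hgnnpp.2, hgnnpn.1, hgnnpn.2, hgnnnp.1, hgnnnp.2, hgnnnn.1, hgnnnn.2]) (by linarith [hgpppp.1, hgpppp.2, hgpppn.1, hgpppn.2, hgppnp.1, hgppnp.2, hgppnn.1, hgppnn.2, hgpnpp.1, hgpnpp.2, hgpnpn.1, hgpnpn.2, hgpnnp.1, hgpnnp.2, hgpnnn.1, hgpnnn.2, hgnppp.1, hgnppp.2, hgnppn.1, hgnppn.2, hgnpnp.1, hgnpnp.2, hgnpnn.1, hgnpnn.2, hgnnpp.1, hgnnpp.2, hgnnpn.1, hgnnpn.2, hgnnnp.1, hgnnnp.2, hgnnnn.1, hgnnnn.2])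
  have hins : ∀ f : ℝ → ℝ, ∑ x ∈ pm, f x = f (-1) + f 1 := fun f =>
    Finset.sum_pair (by norm_num : (-1:ℝ) ≠ 1)
  simp only [hins]
  norm_num [QS]
  linarith [hstruct, epp 1 1, epp 1 (-1), epp (-1) 1, epp (-1) (-1), epn 1 1, epn 1 (-1), epn (-1) 1, epn (-1) (-1), enp 1 1, enp 1 (-1), enp (-1) 1, enp (-1) (-1), enn 1 1, enn 1 (-1), enn (-1) 1, enn (-1) (-1)]
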